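/- For the arithmetic progression a, a+d, …, a+sd with gcd(a,d) = 1, a ≥ 2, d ≥ 1, 1 ≤ s < a, setting b = a + sd, for every nonzero real number z one has ∑_{n ∈ NR} e^{nz} = (e^{⌈(b−1)/s⌉·az} − 1)/((e^{dz} − 1)(e^{az} − 1)) + (e^{⌈(a−1)/s⌉·bz} − 1)/((e^{−dz} − 1)(e^{bz} − 1)) − 1/(e^{z} − 1). -/

import Mathlib

lemma aux_div (s m : ℕ) (hs : 0 < s) :
    (m + s - 1) / s = if m % s = 0 then m / s + 0 else m / s + 1 := by
  split_ifs with h0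
  · obtain ⟨k, hk⟩ := (Nat.dvd_of_mod_eq_zero h0)
    subst hk
    rw [Nat.mul_div_cancel_left _ hs,
      show s * k + s - 1 = s * k + (s - 1) by omega,
      Nat.mul_add_div hs, Nat.div_eq_of_lt (by omega)]
  · have h := Nat.div_add_mod m s
    have hlt : m % s < s := Nat.mod_lt m hs
    have h1 : 1 ≤ m % s := by omega
    rw [show m + s - 1 = s * (m / s) + (m % s + s - 1) by omega,
      Nat.mul_add_div hs]
    congr 1
    exact Nat.div_eq_of_lt_le (by omega) (by omega)
lemma aux_ceil (p s : ℕ) (hs : 0 < s) :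
    ⌈(p : ℝ) / (s : ℝ)⌉ = ((p + s - 1) / s : ℕ) := by
  have hs' : (0:ℝ) < s := by exact_mod_cast hs
  have h := Nat.div_add_mod (p + s - 1) s
  have hlt : (p + s - 1) % s < s := Nat.mod_lt _ hs
  set q := (p + s - 1) / s with hq
  have hc : q * s = s * q := Nat.mul_comm _ _
  apply Int.ceil_eq_iff.mpr
  constructor
  · push_cast
    rw [lt_div_iff₀ hs']
    have : q * s < p + s := by omega
    have hns : (q:ℝ) * s < p + s := by exact_mod_cast this
    nlinarith
  · push_cast
    rw [div_le_iff₀ hs']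
    exact_mod_cast (by omega : p ≤ q * s)
lemma key_telescope (x : ℝ) (a d s : ℕ) (hs : 0 < s) (m : ℕ) :
    (x^d - 1) * ∑ j ∈ Finset.range m, x^((j + s - 1)/s * a + j*d)
      = x^((m + s - 1)/s * a + m*d) - 1
        - (x^a - 1) * x^d * ∑ q ∈ Finset.range ((m + s - 1)/s), x^(q*(a + s*d)) := by
  induction m with
  | zero => simp [Nat.div_eq_of_lt (by omega : s - 1 < s)]
  | succ m ih =>
    rw [Finset.sum_range_succ, mul_add, ih,
      show m + 1 + s - 1 = m + s by omega, Nat.add_div_right _ hs, aux_div s m hs]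
    by_cases h0 : m % s = 0
    · rw [if_pos h0]
      obtain ⟨k, hk⟩ := Nat.dvd_of_mod_eq_zero h0
      have hks : m / s = k := by rw [hk, Nat.mul_div_cancel_left _ hs]
      rw [hks, Nat.add_zero, Finset.sum_range_succ]
      have e1 : k * (a + s * d) = k * a + m * d := by rw [hk]; ring
      have e2 : (k + 1) * a + (m + 1) * d = (k * a + m * d) + (a + d) := by ring
      rw [e1, e2, pow_add, pow_add]
      ring
    · rw [if_neg h0]
      have e2 : (m / s + 1) * a + (m + 1) * d = ((m / s + 1) * a + m * d) + d := by ring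
      rw [e2, pow_add]
      ring

lemma key2 (x : ℝ) (a d s : ℕ) (hs : 0 < s) (ha : 2 ≤ a) :
    (x^d - 1) * ∑ j ∈ Finset.range a, x^((j + s - 1)/s * a + j*d)
      = x^(((a + s - 2)/s + d) * a) - 1
        - (x^a - 1) * x^d * ∑ q ∈ Finset.range ((a + s - 2)/s), x^(q*(a + s*d)) := by
  rw [key_telescope x a d s hs a,
    show a + s - 1 = (a - 1) + s by omega, Nat.add_div_right _ hs,
    show a + s - 2 = (a - 1) + s - 1 by omega, aux_div s (a-1) hs]
  by_cases h0 : (a - 1) % s = 0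
  · rw [if_pos h0]
    obtain ⟨k, hk⟩ := Nat.dvd_of_mod_eq_zero h0
    have hks : (a - 1) / s = k := by rw [hk, Nat.mul_div_cancel_left _ hs]
    have hka : a = s * k + 1 := by omega
    rw [hks]
    simp only [Nat.add_zero]
    rw [Finset.sum_range_succ]
    have e1 : k * (a + s * d) = k * a + s * k * d := by ring
    have e2 : (k + 1) * a + a * d = (k * a + s * k * d) + (a + d) := by
      rw [hka]; ring
    have e3 : (k + d) * a = (k * a + s * k * d) + d := by
      rw [hka]; ring
    rw [e1, e2, e3, pow_add, pow_add]
    ring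
  · rw [if_neg h0]
    have e : ((a - 1) / s + 1) * a + a * d = ((a - 1) / s + 1 + d) * a := by ring
    rw [e]
lemma mod_inj_aux (a d : ℕ) (had : Nat.Coprime a d) {j1 j2 : ℕ}
    (h1 : j1 < a) (h2 : j2 < a) (h : j1 * d % a = j2 * d % a) : j1 = j2 := by
  have h' : j1 ≡ j2 [MOD a] :=
    Nat.ModEq.cancel_right_of_coprime (by simpa [Nat.coprime_comm] using had) h
  have e1 : j1 % a = j2 % a := h'
  rw [Nat.mod_eq_of_lt h1, Nat.mod_eq_of_lt h2] at e1
  exact e1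

lemma mod_pos_aux (a d : ℕ) (had : Nat.Coprime a d) {j : ℕ}
    (h1 : 1 ≤ j) (h2 : j < a) : 1 ≤ j * d % a := by
  rcases Nat.eq_zero_or_pos (j * d % a) with h | h
  · exfalso
    have hdvd : a ∣ j * d := Nat.dvd_of_mod_eq_zero h
    have : a ∣ j := Nat.Coprime.dvd_of_dvd_mul_right had hdvd
    have := Nat.le_of_dvd (by omega) this
    omega
  · exact h

lemma nr_mem (a d s : ℕ) (ha : 2 ≤ a) (hd : 1 ≤ d) (hs : 1 ≤ s)
    (had : Nat.Coprime a d) (n : ℕ) :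
    (0 < n ∧ ¬ ∃ M J : ℕ, J ≤ s * M ∧ n = M * a + J * d)
      ↔ ∃ j, (1 ≤ j ∧ j < a) ∧
          ∃ u, u < (j + s - 1) / s + j * d / a ∧ n = j * d % a + u * a := by
  have ha0 : 0 < a := by omega
  constructor
  · rintro ⟨hn, hrep⟩
    have hr : 1 ≤ n % a := by
      rcases Nat.eq_zero_or_pos (n % a) with h | h
      · exfalso
        apply hrep
        refine ⟨n / a, 0, by omega, ?_⟩
        have h1 := Nat.div_add_mod n a
        have h2 : n / a * a = a * (n / a) := Nat.mul_comm _ _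
        omega
      · exact h
    obtain ⟨e, -, he⟩ := Nat.exists_mul_mod_eq_one_of_coprime
      (Nat.coprime_comm.mp had) (by omega)
    set j := n % a * e % a with hj
    have hjd : j * d % a = n % a := by
      rw [hj, Nat.mod_mul_mod, mul_assoc, Nat.mul_mod,
        Nat.mod_mod_of_dvd _ (dvd_refl a), mul_comm e d, he, mul_one,
        Nat.mod_mod_of_dvd _ (dvd_refl a)]
    have hj1 : 1 ≤ j := by
      rcases Nat.eq_zero_or_pos j with h | h
      · rw [h, Nat.zero_mul, Nat.zero_mod] at hjd; omega
      · exact h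
    have hja : j < a := Nat.mod_lt _ ha0
    refine ⟨j, ⟨hj1, hja⟩, n / a, ?_, ?_⟩
    · by_contra hc
      push_neg at hc
      have hKa : j * d % a + (((j + s - 1) / s) + (j * d / a)) * a = ((j + s - 1) / s) * a + j * d := by
        have h1 := Nat.div_add_mod' (j * d) a
        have h2 : (((j + s - 1) / s) + (j * d / a)) * a = ((j + s - 1) / s) * a + (j * d / a) * a := add_mul _ _ _
        omega
      have hmul : (((j + s - 1) / s) + (j * d / a)) * a ≤ n / a * a := Nat.mul_le_mul_right a hc
      have hmd : n % a + n / a * a = n := Nat.mod_add_div' n a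
      have hge : ((j + s - 1) / s) * a + j * d ≤ n := by omega
      -- construct a representation
      have hnjd : j * d ≤ n := by omega
      have hdvd : a ∣ n - j * d := by
        have : j * d ≡ n [MOD a] := by
          show j * d % a = n % a
          exact hjd
        exact (Nat.modEq_iff_dvd' hnjd).mp this
      obtain ⟨M, hM⟩ := hdvd
      apply hrep
      refine ⟨M, j, ?_, ?_⟩
      · have h1 : a * ((j + s - 1) / s) ≤ a * M := by
          have : ((j + s - 1) / s) * a = a * ((j + s - 1) / s) := Nat.mul_comm _ _
          omega
        have h2 : ((j + s - 1) / s) ≤ M := Nat.le_of_mul_le_mul_left h1 ha0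
        have h3 := Nat.div_add_mod (j + s - 1) s
        have h4 : (j + s - 1) % s < s := Nat.mod_lt _ (by omega)
        have h5 : j ≤ s * ((j + s - 1) / s) := by omega
        have h6 : s * ((j + s - 1) / s) ≤ s * M := Nat.mul_le_mul_left s h2
        omega
      · have : M * a = a * M := Nat.mul_comm _ _
        omega
    · have := Nat.mod_add_div' n a
      omega
  · rintro ⟨j, ⟨hj1, hja⟩, u, hu, rfl⟩
    refine ⟨by have := mod_pos_aux a d had hj1 hja; omega, ?_⟩
    rintro ⟨M, J, hJ, hn⟩
    have hmod : J * d % a = j * d % a := by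
      have h1 : (j * d % a + u * a) % a = (M * a + J * d) % a := by rw [hn]
      rw [Nat.add_mul_mod_self_right, Nat.mod_mod_of_dvd _ (dvd_refl a),
        add_comm (M * a), Nat.add_mul_mod_self_right] at h1
      exact h1.symm
    have hJj : J % a = j % a :=
      Nat.ModEq.cancel_right_of_coprime (by simpa [Nat.coprime_comm] using had) hmod
    rw [Nat.mod_eq_of_lt hja] at hJj
    have hjJ : j ≤ J := by have := Nat.mod_le J a; omega
    have hgjM : ((j + s - 1) / s) ≤ M := by
      by_contra hc
      push_neg at hc
      have h1 : M + 1 ≤ ((j + s - 1) / s) := hc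
      have h2 := Nat.mul_le_mul_left s h1
      have h3 : s * (M + 1) = s * M + s := by ring
      have h4 := Nat.div_add_mod (j + s - 1) s
      have h5 : (j + s - 1) % s < s := Nat.mod_lt _ (by omega)
      omega
    have hMa : ((j + s - 1) / s) * a ≤ M * a := Nat.mul_le_mul_right a hgjM
    have hJd : j * d ≤ J * d := Nat.mul_le_mul_right d hjJ
    have hua : (u + 1) * a ≤ (((j + s - 1) / s) + (j * d / a)) * a := Nat.mul_le_mul_right a (by omega)
    have h1 := Nat.div_add_mod' (j * d) a
    have h2 : (((j + s - 1) / s) + (j * d / a)) * a = ((j + s - 1) / s) * a + (j * d / a) * a := add_mul _ _ _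
    have h3 : (u + 1) * a = u * a + a := by ring
    omega
lemma rep_iff (a d s : ℕ) (hs : 0 < s) (n : ℕ) :
    (∃ x : Fin (s + 1) → ℕ, n = ∑ i : Fin (s + 1), (a + (i : ℕ) * d) * x i)
      ↔ ∃ M J : ℕ, J ≤ s * M ∧ n = M * a + J * d := by
  constructor
  · rintro ⟨x, rfl⟩
    refine ⟨∑ i : Fin (s+1), x i, ∑ i : Fin (s+1), (i : ℕ) * x i, ?_, ?_⟩
    · rw [Finset.mul_sum]
      exact Finset.sum_le_sum fun i _ => Nat.mul_le_mul_right _ (Fin.is_le i)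
    · rw [Finset.sum_mul, Finset.sum_mul, ← Finset.sum_add_distrib]
      apply Finset.sum_congr rfl
      intro i _
      ring
  · rintro ⟨M, J, hJ, rfl⟩
    by_cases hk : J % s = 0
    · -- J = s * (J/s), M ≥ J/s
      have hq : J / s ≤ M := by
        refine Nat.le_of_mul_le_mul_left ?_ hs
        have := Nat.div_add_mod J s
        omega
      obtain ⟨m, hm⟩ : ∃ m, M = J / s + m := ⟨M - J / s, by omega⟩
      refine ⟨fun i => (if i = (0 : Fin (s+1)) then m else 0) +
        (if i = Fin.last s then J / s else 0), ?_⟩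
      simp only [mul_add, mul_ite, mul_zero, Finset.sum_add_distrib,
        Finset.sum_ite_eq', Finset.mem_univ, if_true]
      simp only [Fin.val_zero, Fin.val_last, Nat.zero_mul, Nat.add_zero]
      have hJs : s * (J / s) = J := by
        have := Nat.div_add_mod J s; omega
      rw [hm]
      nlinarith [hJs]
    · have hq : J / s + 1 ≤ M := by
        have h1 := Nat.div_add_mod J s
        have h2 : J % s < s := Nat.mod_lt _ hs
        by_contra hc
        push_neg at hc
        have : M ≤ J / s := by omega
        have : s * M ≤ s * (J / s) := Nat.mul_le_mul_left s this
        omega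
      obtain ⟨m, hm⟩ : ∃ m, M = J / s + 1 + m := ⟨M - (J / s + 1), by omega⟩
      have hkl : J % s < s + 1 := by
        have := Nat.mod_lt J hs; omega
      refine ⟨fun i => (if i = (0 : Fin (s+1)) then m else 0) +
        (if i = Fin.last s then J / s else 0) +
        (if i = (⟨J % s, hkl⟩ : Fin (s+1)) then 1 else 0), ?_⟩
    
      simp only [mul_add, mul_ite, mul_zero, Finset.sum_add_distrib,
        Finset.sum_ite_eq', Finset.mem_univ, if_true]
      simp only [Fin.val_zero, Fin.val_last, Nat.zero_mul, Nat.add_zero, mul_one]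
      have hJs : s * (J / s) + J % s = J := Nat.div_add_mod J s
      rw [hm]
      nlinarith [hJs]

lemma final_algebra (x P A B W1 W2 S T R G : ℝ)
    (hP : P - 1 ≠ 0) (hA : A - 1 ≠ 0) (hB : B - 1 ≠ 0) (hx : x - 1 ≠ 0)
    (hP0 : P ≠ 0) (hPinv : P⁻¹ - 1 ≠ 0)
    (hI : S * (A - 1) = T - R)
    (hII : R * (x - 1) = A - x)
    (hIII : (P - 1) * (1 + T) = W1 - 1 - (A - 1) * P * G)
    (hIV : G * (B - 1) = W2 - 1) :
    S = (W1 - 1) / ((P - 1) * (A - 1)) + (W2 - 1) / ((P⁻¹ - 1) * (B - 1))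
      - 1 / (x - 1) := by
  have hPP : P⁻¹ - 1 = -(P - 1) * P⁻¹ := by field_simp; ring
  have hPPne : (-(P - 1) * P⁻¹) * (B - 1) ≠ 0 :=
    mul_ne_zero (mul_ne_zero (neg_ne_zero.mpr hP) (inv_ne_zero hP0)) hB
  have e2 : (W2 - 1) / ((P⁻¹ - 1) * (B - 1)) = -(P * G) / (P - 1) := by
    rw [← hIV, hPP, div_eq_div_iff hPPne hP]
    have hinv : P * P⁻¹ = 1 := mul_inv_cancel₀ hP0
    linear_combination (-(G * (B - 1) * (P - 1))) * hinv
  have e1 : (W1 - 1) / ((P - 1) * (A - 1)) = (1 + T) / (A - 1) + P * G / (P - 1) := by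
    rw [div_add_div _ _ hA hP, div_eq_div_iff (mul_ne_zero hP hA) (mul_ne_zero hA hP)]
    linear_combination -(A - 1) * (P - 1) * hIII
  have e3 : S = (1 + T) / (A - 1) - 1 / (x - 1) := by
    rw [div_sub_div _ _ hA hx, eq_div_iff (mul_ne_zero hA hx)]
    linear_combination (x - 1) * hI - hII
  rw [e1, e2, e3]
  ring

theorem egf_NR_arithmetic_progression
    (a d s : ℕ) (ha : 2 ≤ a) (hd : 1 ≤ d) (hs : 1 ≤ s) (hsa : s < a)
    (had : Nat.Coprime a d)
    (b : ℕ) (hb : b = a + s * d)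
    (NR : Finset ℕ)
    (hNR : ∀ n : ℕ, n ∈ NR ↔ 0 < n ∧
      ¬ ∃ x : Fin (s + 1) → ℕ, n = ∑ i : Fin (s + 1), (a + (i : ℕ) * d) * x i)
    (z : ℝ) (hz : z ≠ 0) :
    ∑ n ∈ NR, Real.exp (n * z) =
      (Real.exp ((⌈((b : ℝ) - 1) / (s : ℝ)⌉ : ℝ) * (a : ℝ) * z) - 1) /
        ((Real.exp (d * z) - 1) * (Real.exp (a * z) - 1))
      + (Real.exp ((⌈((a : ℝ) - 1) / (s : ℝ)⌉ : ℝ) * (b : ℝ) * z) - 1) /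
        ((Real.exp (-(d * z)) - 1) * (Real.exp (b * z) - 1))
      - 1 / (Real.exp z - 1) := by
  have ha0 : 0 < a := by omega
  have hs0 : 0 < s := hs
  have hb0 : 2 ≤ b := by omega
  set x := Real.exp z with hx
  -- basic nonvanishing facts
  have hx0 : 0 < x := Real.exp_pos z
  have hpow : ∀ m : ℕ, 0 < m → x ^ m ≠ 1 := by
    intro m hm
    rw [← Real.exp_nat_mul, Ne, Real.exp_eq_one_iff]
    intro h
    rcases mul_eq_zero.mp h with h | h
    · exact_mod_cast absurd h (by positivity : ((m:ℝ)) ≠ 0)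
    · exact hz h
  have hxd1 : x ^ d - 1 ≠ 0 := sub_ne_zero.mpr (hpow d hd)
  have hxa1 : x ^ a - 1 ≠ 0 := sub_ne_zero.mpr (hpow a ha0)
  have hxb1 : x ^ b - 1 ≠ 0 := sub_ne_zero.mpr (hpow b (by omega))
  have hx1 : x - 1 ≠ 0 := by
    have := hpow 1 one_pos; rw [pow_one] at this; exact sub_ne_zero.mpr this
  have hxd0 : x ^ d ≠ 0 := by positivity
  have hxinv : (x ^ d)⁻¹ - 1 ≠ 0 := by
    rw [sub_ne_zero, Ne, inv_eq_one]
    exact hpow d hd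
  -- notation
  set C : ℕ := (a + s - 2) / s + d with hC
  set D : ℕ := (a + s - 2) / s with hD
  -- rewrite ceilings and exponentials
  have hcb : (⌈((b : ℝ) - 1) / (s : ℝ)⌉ : ℝ) * (a : ℝ) * z = ((C * a : ℕ) : ℝ) * z := by
    have h1 : ((b : ℝ) - 1) = ((b - 1 : ℕ) : ℝ) := by
      push_cast [Nat.cast_sub (by omega : 1 ≤ b)]; ring
    rw [h1, aux_ceil (b - 1) s hs0,
      show (b - 1 + s - 1) / s = C by
        rw [hC, hb, show a + s * d - 1 + s - 1 = (a + s - 2) + s * d by omega,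
          Nat.add_mul_div_left _ _ hs0]]
    push_cast
    ring
  have hca : (⌈((a : ℝ) - 1) / (s : ℝ)⌉ : ℝ) * (b : ℝ) * z = ((D * b : ℕ) : ℝ) * z := by
    have h1 : ((a : ℝ) - 1) = ((a - 1 : ℕ) : ℝ) := by
      push_cast [Nat.cast_sub (by omega : 1 ≤ a)]; ring
    rw [h1, aux_ceil (a - 1) s hs0,
      show (a - 1 + s - 1) / s = D by rw [hD]; congr 1; omega]
    push_cast
    ring
  rw [hcb, hca, Real.exp_nat_mul, Real.exp_nat_mul, Real.exp_nat_mul,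
    Real.exp_nat_mul, Real.exp_nat_mul, Real.exp_neg, Real.exp_nat_mul]
  simp only [Real.exp_nat_mul, ← hx]
  -- the explicit description of NR
  have hNRE : NR = (Finset.Ico 1 a).biUnion
      (fun j => (Finset.range ((j + s - 1) / s + j * d / a)).image
        (fun u => j * d % a + u * a)) := by
    apply Finset.ext
    intro n
    rw [hNR n]
    simp only [rep_iff a d s hs0]
    rw [nr_mem a d s ha hd hs had n]
    simp only [Finset.mem_biUnion, Finset.mem_Ico, Finset.mem_image,
      Finset.mem_range, eq_comm]
  -- sum over the explicit set
  have hdisj : (↑(Finset.Ico 1 a) : Set ℕ).PairwiseDisjoint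
      (fun j => (Finset.range ((j + s - 1) / s + j * d / a)).image
        (fun u => j * d % a + u * a)) := by
    intro j1 hj1 j2 hj2 hne
    simp only [Finset.mem_coe, Finset.mem_Ico] at hj1 hj2
    apply Finset.disjoint_left.mpr
    intro n hn1 hn2
    simp only [Finset.mem_image, Finset.mem_range] at hn1 hn2
    obtain ⟨u1, _, h1⟩ := hn1
    obtain ⟨u2, _, h2⟩ := hn2
    apply hne
    apply mod_inj_aux a d had (by omega : j1 < a) (by omega : j2 < a)
    have m1 : n % a = j1 * d % a := by
      rw [← h1, Nat.add_mul_mod_self_right, Nat.mod_mod_of_dvd _ (dvd_refl a)]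
    have m2 : n % a = j2 * d % a := by
      rw [← h2, Nat.add_mul_mod_self_right, Nat.mod_mod_of_dvd _ (dvd_refl a)]
    omega
  rw [hNRE, Finset.sum_biUnion hdisj]
  have hsimg : ∀ j ∈ Finset.Ico 1 a,
      ∑ n ∈ (Finset.range ((j + s - 1) / s + j * d / a)).image
        (fun u => j * d % a + u * a), x ^ n
      = ∑ u ∈ Finset.range ((j + s - 1) / s + j * d / a), x ^ (j * d % a + u * a) := by
    intro j hj
    apply Finset.sum_image
    intro u1 _ u2 _ h
    have : u1 * a = u2 * a := by simp only at h; omega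
    exact Nat.eq_of_mul_eq_mul_right ha0 this
  rw [Finset.sum_congr rfl hsimg]
  -- key sum identities
  set T : ℝ := ∑ j ∈ Finset.Ico 1 a, x ^ ((j + s - 1) / s * a + j * d) with hT
  set R : ℝ := ∑ j ∈ Finset.Ico 1 a, x ^ (j * d % a) with hR
  set G : ℝ := ∑ q ∈ Finset.range D, x ^ (q * b) with hG
  have hI : (∑ j ∈ Finset.Ico 1 a,
      ∑ u ∈ Finset.range ((j + s - 1) / s + j * d / a), x ^ (j * d % a + u * a))
      * (x ^ a - 1) = T - R := by
    rw [Finset.sum_mul, hT, hR, ← Finset.sum_sub_distrib]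
    apply Finset.sum_congr rfl
    intro j hj
    have hexp : ∀ u, x ^ (j * d % a + u * a) = x ^ (j * d % a) * (x ^ a) ^ u := by
      intro u
      rw [pow_add, mul_comm u a, pow_mul]
    simp only [hexp]
    rw [← Finset.mul_sum, mul_assoc, geom_sum_mul, mul_sub, mul_one,
      ← pow_mul, ← pow_add]
    congr 2
    have h1 := Nat.div_add_mod' (j * d) a
    have h2 : a * ((j + s - 1) / s + j * d / a)
        = a * ((j + s - 1) / s) + a * (j * d / a) := by ring
    have h3 : (j + s - 1) / s * a = a * ((j + s - 1) / s) := by ring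
    have h4 : j * d / a * a = a * (j * d / a) := by ring
    omega
  have hII : R * (x - 1) = x ^ a - x := by
    have himg : (Finset.Ico 1 a).image (fun j => j * d % a) = Finset.Ico 1 a := by
      apply Finset.eq_of_subset_of_card_le
      · intro r hr
        simp only [Finset.mem_image, Finset.mem_Ico] at hr ⊢
        obtain ⟨j, hj, rfl⟩ := hr
        exact ⟨mod_pos_aux a d had hj.1 hj.2, Nat.mod_lt _ ha0⟩
      · rw [Finset.card_image_of_injOn]
        intro j1 hj1 j2 hj2 h
        simp only [Finset.mem_coe, Finset.mem_Ico] at hj1 hj2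
        exact mod_inj_aux a d had (by omega) (by omega) h
    have hRR : R = ∑ r ∈ Finset.Ico 1 a, x ^ r := by
      have hsi : ∑ r ∈ (Finset.Ico 1 a).image (fun j => j * d % a), x ^ r
          = ∑ j ∈ Finset.Ico 1 a, x ^ (j * d % a) := by
        apply Finset.sum_image
        intro j1 hj1 j2 hj2 h
        simp only [Finset.mem_coe, Finset.mem_Ico] at hj1 hj2
        exact mod_inj_aux a d had (by omega) (by omega) h
      rw [hR, ← hsi, himg]
    rw [hRR]
    have h0 : ∑ r ∈ Finset.range a, x ^ r = 1 + ∑ r ∈ Finset.Ico 1 a, x ^ r := by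
      rw [Finset.range_eq_Ico, Finset.sum_eq_sum_Ico_succ_bot ha0, pow_zero]
    have hg := geom_sum_mul x a
    rw [h0] at hg
    nlinarith [hg]
  have hIII : (x ^ d - 1) * (1 + T) = x ^ (C * a) - 1 - (x ^ a - 1) * x ^ d * G := by
    have hk := key2 x a d s hs0 ha
    have h0 : ∑ j ∈ Finset.range a, x ^ ((j + s - 1) / s * a + j * d)
        = 1 + T := by
      rw [Finset.range_eq_Ico, Finset.sum_eq_sum_Ico_succ_bot ha0, hT]
      congr 1
      rw [Nat.div_eq_of_lt (by omega : 0 + s - 1 < s)]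
      norm_num
    rw [h0] at hk
    rw [hk, hC, hD, ← hb]

  have hIV : G * (x ^ b - 1) = x ^ (D * b) - 1 := by
    rw [hG]
    have hexp : ∀ q, x ^ (q * b) = (x ^ b) ^ q := by
      intro q; rw [mul_comm, pow_mul]
    simp only [hexp]
    rw [geom_sum_mul, ← pow_mul, mul_comm b D]
  exact final_algebra x (x ^ d) (x ^ a) (x ^ b) (x ^ (C * a)) (x ^ (D * b))
    _ T R G hxd1 hxa1 hxb1 hx1 hxd0 hxinv hI hII hIII hIV
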